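/- arXiv:2011.13460 — 8 statements merged into one kernel-verified Lean document; each statement's English description precedes it below -/
import Mathlib

section
/- Let j : Y → X be a continuous surjection of compact metric spaces. Then the following are equivalent: (i) there exists a unique minimal closed set K ⊆ Y such that j(K) = X (i.e., a unique closed set K with j(K) = X that is minimal with respect to inclusion among closed sets with full image); (ii) the set {x ∈ X : the fiber j⁻¹(x) is a singleton} is dense in X. -/
open Set Metric

namespace WhyburnAux

variable {Y X : Type*} [MetricSpace Y] [CompactSpace Y] [MetricSpace X] [CompactSpace X]
  {j : Y → X}

lemma pair_image_isClosed (hj : Continuous j) {K : Set Y} (hK : IsClosed K) (ε : ℝ) :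
    IsClosed ((fun p : Y × Y => j p.1) ''
      {p : Y × Y | p.1 ∈ K ∧ p.2 ∈ K ∧ j p.1 = j p.2 ∧ ε ≤ dist p.1 p.2}) := by
  have hC : IsClosed {p : Y × Y | p.1 ∈ K ∧ p.2 ∈ K ∧ j p.1 = j p.2 ∧ ε ≤ dist p.1 p.2} :=
    (hK.preimage continuous_fst).inter ((hK.preimage continuous_snd).inter
      ((isClosed_eq (hj.comp continuous_fst) (hj.comp continuous_snd)).inter
        (isClosed_le continuous_const continuous_dist)))
  exact (hC.isCompact.image (hj.comp continuous_fst)).isClosed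

lemma exists_minimal (hj : Continuous j) {L : Set Y} (hL : IsClosed L) (hLim : j '' L = univ) :
    ∃ K, K ⊆ L ∧ IsClosed K ∧ j '' K = univ ∧
      ∀ F ⊆ K, IsClosed F → j '' F = univ → F = K := by
  have hch : ∀ c ⊆ {F : Set Y | IsClosed F ∧ j '' F = univ}, IsChain (· ⊆ ·) c →
      c.Nonempty → ∃ lb ∈ {F : Set Y | IsClosed F ∧ j '' F = univ}, ∀ s ∈ c, lb ⊆ s := by
    intro c hcS hchain hcne
    have hne : Nonempty c := hcne.to_subtype
    refine ⟨⋂₀ c, ⟨isClosed_sInter fun F hF => (hcS hF).1, ?_⟩,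
      fun s hs => sInter_subset_of_mem hs⟩
    apply eq_univ_of_forall
    intro x
    have hnei : (⋂ F : c, ((F : Set Y) ∩ j ⁻¹' {x})).Nonempty := by
      apply IsCompact.nonempty_iInter_of_directed_nonempty_isCompact_isClosed
      · rintro ⟨F, hF⟩ ⟨G, hG⟩
        rcases hchain.total hF hG with h | h
        · exact ⟨⟨F, hF⟩, Subset.rfl, inter_subset_inter_left _ h⟩
        · exact ⟨⟨G, hG⟩, inter_subset_inter_left _ h, Subset.rfl⟩
      · rintro ⟨F, hF⟩
        have hx : x ∈ j '' F := (hcS hF).2 ▸ mem_univ x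
        obtain ⟨y, hyF, hyx⟩ := hx
        exact ⟨y, hyF, hyx⟩
      · rintro ⟨F, hF⟩
        exact ((hcS hF).1.inter (isClosed_singleton.preimage hj)).isCompact
      · rintro ⟨F, hF⟩
        exact (hcS hF).1.inter (isClosed_singleton.preimage hj)
    obtain ⟨y, hy⟩ := hnei
    simp only [mem_iInter, mem_inter_iff, mem_preimage, mem_singleton_iff] at hy
    obtain ⟨F0, hF0⟩ := hcne
    exact ⟨y, mem_sInter.2 fun F hF => (hy ⟨F, hF⟩).1, (hy ⟨F0, hF0⟩).2⟩
  obtain ⟨K, hKL, hKmin⟩ := zorn_superset_nonempty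
      {F : Set Y | IsClosed F ∧ j '' F = univ} hch L ⟨hL, hLim⟩
  exact ⟨K, hKL, hKmin.1.1, hKmin.1.2,
      fun F hFK hF hFim => subset_antisymm hFK (hKmin.2 ⟨hF, hFim⟩ hFK)⟩

lemma dense_singleton_fibers (hj : Continuous j) {K : Set Y} (hK : IsClosed K)
    (hKim : j '' K = univ)
    (hmin : ∀ F ⊆ K, IsClosed F → j '' F = univ → F = K) :
    Dense {x : X | ∀ p ∈ K, ∀ q ∈ K, j p = x → j q = x → p = q} := by
  set G : ℕ → Set X := fun n => ((fun p : Y × Y => j p.1) ''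
      {p : Y × Y | p.1 ∈ K ∧ p.2 ∈ K ∧ j p.1 = j p.2 ∧ 1/((n:ℝ)+1) ≤ dist p.1 p.2})ᶜ with hGdef
  have hGopen : ∀ n, IsOpen (G n) := fun n => (pair_image_isClosed hj hK _).isOpen_compl
  have hGdense : ∀ n, Dense (G n) := by
    intro n
    rw [dense_iff_inter_open]
    intro U hU hUne
    set ε := 1/((n:ℝ)+1) with hε'
    have hε : 0 < ε := by positivity
    obtain ⟨x₀, hx₀⟩ := hUne
    obtain ⟨y, hyK, hyx⟩ : ∃ y ∈ K, j y = x₀ := by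
      have : x₀ ∈ j '' K := hKim ▸ mem_univ x₀
      exact this
    set F := K ∩ (ball y (ε/3) ∩ j ⁻¹' U)ᶜ with hFdef
    have hFc : IsClosed F := hK.inter (isOpen_ball.inter (hU.preimage hj)).isClosed_compl
    have hyF : y ∉ F := fun h => h.2 ⟨mem_ball_self (by positivity), by
      simp only [mem_preimage, hyx]; exact hx₀⟩
    have hFne : j '' F ≠ univ := by
      intro h
      exact hyF ((hmin F inter_subset_left hFc h) ▸ hyK)
    obtain ⟨x, hx⟩ := (ne_univ_iff_exists_notMem _).1 hFne
    have hball : ∀ p ∈ K, j p = x → p ∈ ball y (ε/3) ∩ j ⁻¹' U := by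
      intro p hpK hpx
      by_contra hc
      exact hx ⟨p, ⟨hpK, hc⟩, hpx⟩
    obtain ⟨z, hzK, hzx⟩ : ∃ z ∈ K, j z = x := by
      have : x ∈ j '' K := hKim ▸ mem_univ x
      exact this
    have hxU : x ∈ U := by have := (hball z hzK hzx).2; rwa [mem_preimage, hzx] at this
    refine ⟨x, hxU, ?_⟩
    intro hmem
    obtain ⟨p, ⟨hp1, hp2, hpe, hd⟩, hpx⟩ := hmem
    have h1 := (hball p.1 hp1 hpx).1
    have h2 := (hball p.2 hp2 (hpe ▸ hpx)).1
    rw [mem_ball] at h1 h2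
    have : dist p.1 p.2 < ε := by
      calc dist p.1 p.2 ≤ dist p.1 y + dist y p.2 := dist_triangle _ _ _
      _ < ε/3 + ε/3 := by rw [dist_comm y p.2]; linarith [dist_comm p.2 y ▸ h2]
      _ < ε := by linarith
    linarith
  have hdi : Dense (⋂ n, G n) := dense_iInter_of_isOpen hGopen hGdense
  refine hdi.mono ?_
  intro x hx p hpK q hqK hpx hqx
  by_contra hpq
  have hd : 0 < dist p q := dist_pos.2 hpq
  obtain ⟨n, hn⟩ := exists_nat_one_div_lt hd
  have hxn := mem_iInter.1 hx n
  exact hxn ⟨(p, q), ⟨hpK, hqK, hpx.trans hqx.symm, le_of_lt hn⟩, hpx⟩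

omit [MetricSpace Y] [CompactSpace Y] [MetricSpace X] [CompactSpace X] in
lemma surj_fiber {j : Y → X} {K : Set Y} (h : j '' K = Set.univ) (x : X) :
    ∃ z ∈ K, j z = x := by
  have hx : x ∈ j '' K := by rw [h]; exact Set.mem_univ x
  exact hx

end WhyburnAux

/-- Generalized Whyburn theorem: for a continuous surjection `j : Y → X` of compact
metric spaces, there exists a unique minimal closed set `K ⊆ Y` with `j(K) = X`
iff the set of points of `X` with singleton fiber is dense in `X`. -/
theorem generalized_whyburn {Y X : Type*} [MetricSpace Y] [CompactSpace Y]
    [MetricSpace X] [CompactSpace X] (j : Y → X) (hj : Continuous j)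
    (hjs : Function.Surjective j) :
    (∃! K : Set Y, IsClosed K ∧ j '' K = Set.univ ∧
        ∀ F ⊆ K, IsClosed F → j '' F = Set.univ → F = K) ↔
      Dense {x : X | ∃! y : Y, j y = x} := by
  classical
  constructor
  · rintro ⟨K, ⟨hKc, hKim, hKmin⟩, hKuniq⟩
    by_contra hnd
    set S := {x : X | ∃! y : Y, j y = x} with hSdef
    have hDK := WhyburnAux.dense_singleton_fibers hj hKc hKim hKmin
    set D := {x : X | ∀ p ∈ K, ∀ q ∈ K, j p = x → j q = x → p = q} with hDdef
    -- covering of X by closure S and the "fibers with an ε-separated pair" sets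
    set P : ℕ → Set X := fun m => (fun p : Y × Y => j p.1) ''
      {p : Y × Y | p.1 ∈ (Set.univ : Set Y) ∧ p.2 ∈ (Set.univ : Set Y) ∧ j p.1 = j p.2 ∧
        1/((m:ℝ)+1) ≤ dist p.1 p.2} with hPdef
    have hPc : ∀ m, IsClosed (P m) := fun m => WhyburnAux.pair_image_isClosed hj isClosed_univ _
    set f : ℕ → Set X := fun n => Nat.casesOn n (closure S) (fun m => P m) with hfdef
    have hfc : ∀ n, IsClosed (f n) := by
      intro n
      rcases n with _ | m
      · exact isClosed_closure
      · exact hPc m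
    have hfU : ⋃ n, f n = Set.univ := by
      apply Set.eq_univ_of_forall
      intro x
      by_cases hx : x ∈ closure S
      · exact Set.mem_iUnion.2 ⟨0, hx⟩
      · have hxS : x ∉ S := fun h => hx (subset_closure h)
        obtain ⟨y, hyx⟩ := hjs x
        have hz : ∃ z, j z = x ∧ z ≠ y := by
          by_contra h
          push_neg at h
          exact hxS ⟨y, hyx, h⟩
        obtain ⟨z, hzx, hzy⟩ := hz
        obtain ⟨m, hm⟩ := exists_nat_one_div_lt (dist_pos.2 hzy)
        exact Set.mem_iUnion.2 ⟨m+1,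
          ⟨(z, y), ⟨Set.mem_univ _, Set.mem_univ _, hzx.trans hyx.symm, le_of_lt hm⟩, hzx⟩⟩
    have hdint := dense_iUnion_interior_of_closed hfc hfU
    have hndS : ∃ x, x ∉ closure S := by
      by_contra h
      push_neg at h
      exact hnd h
    obtain ⟨x₀, hx₀⟩ := hndS
    obtain ⟨x₁, hx₁i, hx₁U⟩ := hdint.exists_mem_open isClosed_closure.isOpen_compl ⟨x₀, hx₀⟩
    obtain ⟨n, hx₁n⟩ := Set.mem_iUnion.1 hx₁i
    rcases n with _ | m
    · exact hx₁U (interior_subset hx₁n)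
    · set ε := 1/((m:ℝ)+1) with hεdef
      have hε : 0 < ε := by positivity
      set V' := (closure S)ᶜ ∩ interior (f (m+1)) with hV'def
      have hV'open : IsOpen V' := isClosed_closure.isOpen_compl.inter isOpen_interior
      have hV'ne : V'.Nonempty := ⟨x₁, hx₁U, hx₁n⟩
      have hV'P : V' ⊆ P m := fun x hx => interior_subset hx.2
      -- the set of "far from K" fiber points over V' ∩ D
      set B := {y : Y | j y ∈ V' ∧ j y ∈ D ∧ ∀ z ∈ K, j z = j y → ε/2 ≤ dist y z} with hBdef
      have hclaim : ∀ x ∈ V', x ∈ D → ∃ y ∈ B, j y = x := by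
        intro x hxV hxD
        obtain ⟨p, ⟨-, -, hpe, hd⟩, hpx⟩ := hV'P hxV
        simp only at hpx
        obtain ⟨y₀, hy₀K, hy₀x⟩ : ∃ z ∈ K, j z = x := WhyburnAux.surj_fiber hKim x
        have hzeq : ∀ z ∈ K, j z = x → z = y₀ := fun z hz hzx => hxD z hz y₀ hy₀K hzx hy₀x
        rcases le_total (ε/2) (dist p.1 y₀) with h | h
        · refine ⟨p.1, ⟨?_, ?_, ?_⟩, hpx⟩
          · rw [hpx]; exact hxV
          · rw [hpx]; exact hxD
          · intro z hz hzx
            rw [hzeq z hz (hzx.trans hpx)]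
            exact h
        · have hp2x : j p.2 = x := hpe.symm.trans hpx
          refine ⟨p.2, ⟨?_, ?_, ?_⟩, hp2x⟩
          · rw [hp2x]; exact hxV
          · rw [hp2x]; exact hxD
          · intro z hz hzx
            rw [hzeq z hz (hzx.trans hp2x), dist_comm]
            have htri := dist_triangle p.1 y₀ p.2
            linarith
      set A := closure B with hAdef
      set L := A ∪ (K ∩ j ⁻¹' V'ᶜ) with hLdef
      have hLc : IsClosed L :=
        isClosed_closure.union (hKc.inter (hV'open.isClosed_compl.preimage hj))
      have hLim : j '' L = Set.univ := by
        apply Set.eq_univ_of_forall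
        intro x
        by_cases hxV : x ∈ V'
        · have hAim : V' ⊆ j '' A := by
            have h1 : V' ∩ D ⊆ j '' B := by
              rintro x' ⟨hx'V, hx'D⟩
              obtain ⟨y, hyB, hyx⟩ := hclaim x' hx'V hx'D
              exact ⟨y, hyB, hyx⟩
            have h2 : IsClosed (j '' A) := (isClosed_closure.isCompact.image hj).isClosed
            calc V' ⊆ closure (V' ∩ D) := hDK.open_subset_closure_inter hV'open
            _ ⊆ closure (j '' B) := closure_mono h1
            _ ⊆ closure (j '' A) := closure_mono (Set.image_mono subset_closure)
            _ = j '' A := h2.closure_eq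
          exact Set.image_mono Set.subset_union_left (hAim hxV)
        · obtain ⟨y, hyK, hyx⟩ : ∃ z ∈ K, j z = x := WhyburnAux.surj_fiber hKim x
          exact ⟨y, Or.inr ⟨hyK, by simp only [Set.mem_preimage, Set.mem_compl_iff, hyx]; exact hxV⟩,
            hyx⟩
      obtain ⟨M, hML, hMc, hMim, hMmin⟩ := WhyburnAux.exists_minimal hj hLc hLim
      have hMK : M = K := hKuniq M ⟨hMc, hMim, hMmin⟩
      have hKL : K ⊆ L := hMK ▸ hML
      obtain ⟨x₂, hx₂D, hx₂V⟩ := hDK.exists_mem_open hV'open hV'ne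
      obtain ⟨y₀, hy₀K, hy₀x⟩ : ∃ z ∈ K, j z = x₂ := WhyburnAux.surj_fiber hKim x₂
      have hy₀A : y₀ ∈ A := by
        rcases hKL hy₀K with h | h
        · exact h
        · exfalso
          have h2 := h.2
          rw [Set.mem_preimage, Set.mem_compl_iff, hy₀x] at h2
          exact h2 hx₂V
      obtain ⟨b, hbB, hbl⟩ := mem_closure_iff_seq_limit.1 hy₀A
      choose z hzK hzx using fun k => (show ∃ w ∈ K, j w = j (b k) from
        WhyburnAux.surj_fiber hKim (j (b k)))
      have hdist : ∀ k, ε/2 ≤ dist (b k) (z k) := fun k => (hbB k).2.2 (z k) (hzK k) (hzx k)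
      obtain ⟨w, hwK, φ, hφ, hwl⟩ := hKc.isCompact.tendsto_subseq hzK
      have hbφ : Filter.Tendsto (b ∘ φ) Filter.atTop (nhds y₀) := hbl.comp hφ.tendsto_atTop
      have hjw : j w = x₂ := by
        have t1 : Filter.Tendsto (j ∘ (z ∘ φ)) Filter.atTop (nhds (j w)) :=
          (hj.tendsto w).comp hwl
        have t2 : Filter.Tendsto (j ∘ (b ∘ φ)) Filter.atTop (nhds (j y₀)) :=
          (hj.tendsto y₀).comp hbφ
        have heq : j ∘ (z ∘ φ) = j ∘ (b ∘ φ) := funext fun k => hzx (φ k)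
        rw [heq] at t1
        rw [← hy₀x]
        exact tendsto_nhds_unique t1 t2
      have hwy₀ : w = y₀ := hx₂D w hwK y₀ hy₀K hjw hy₀x
      have hl0 : Filter.Tendsto (fun k => dist ((b ∘ φ) k) ((z ∘ φ) k)) Filter.atTop (nhds 0) := by
        have := hbφ.dist hwl
        rw [hwy₀, dist_self] at this
        exact this
      have hfin : ε/2 ≤ (0:ℝ) :=
        ge_of_tendsto hl0 (Filter.Eventually.of_forall fun k => hdist (φ k))
      linarith
  · intro hdense
    set S := {x : X | ∃! y : Y, j y = x} with hSdef
    have hcore : ∀ K : Set Y, j '' K = Set.univ → j ⁻¹' S ⊆ K := by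
      intro K hKim y hy
      obtain ⟨z, hzK, hzx⟩ : ∃ z ∈ K, j z = j y := WhyburnAux.surj_fiber hKim (j y)
      obtain ⟨w, hw, huniq⟩ := hy
      exact ((huniq z hzx).trans (huniq y rfl).symm) ▸ hzK
    set K₀ := closure (j ⁻¹' S) with hK₀def
    have hK₀c : IsClosed K₀ := isClosed_closure
    have hK₀im : j '' K₀ = Set.univ := by
      apply Set.eq_univ_of_univ_subset
      have h1 : S ⊆ j '' K₀ := by
        intro x hxS
        obtain ⟨y, hyx⟩ := hjs x
        exact ⟨y, subset_closure (by rw [Set.mem_preimage, hyx]; exact hxS), hyx⟩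
      have h2 : IsClosed (j '' K₀) := (hK₀c.isCompact.image hj).isClosed
      calc Set.univ = closure S := hdense.closure_eq.symm
      _ ⊆ closure (j '' K₀) := closure_mono h1
      _ = j '' K₀ := h2.closure_eq
    have hK₀min : ∀ F ⊆ K₀, IsClosed F → j '' F = Set.univ → F = K₀ :=
      fun F hFK hFc hFim => subset_antisymm hFK (hFc.closure_subset_iff.2 (hcore F hFim))
    refine ⟨K₀, ⟨hK₀c, hK₀im, hK₀min⟩, ?_⟩
    rintro K ⟨hKc, hKim, hKmin⟩
    exact (hKmin K₀ (hKc.closure_subset_iff.2 (hcore K hKim)) hK₀c hK₀im).symm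
end

section
/- Let j : Y → X be a continuous surjection of compact metric spaces. Then j is irreducible if and only if j is almost one-to-one. -/
/-- Whyburn's theorem: a continuous surjection of compact metric spaces is irreducible
(every proper closed subset has proper image) iff it is almost one-to-one
(the points whose fiber over their image is a singleton are dense). -/
theorem whyburn_irreducible_iff_almost_one_to_one {Y X : Type*}
    [MetricSpace Y] [CompactSpace Y] [MetricSpace X] [CompactSpace X]
    (j : Y → X) (hj : Continuous j) (hjs : Function.Surjective j) :
    (∀ F : Set Y, IsClosed F → F ⊂ Set.univ → j '' F ⊂ Set.univ) ↔
      Dense {y : Y | j ⁻¹' {j y} = {y}} := by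
  constructor
  · intro h
    -- open dense sets: points whose fiber lies in some small ball
    set S : ℕ → Set Y := fun n =>
      ⋃ z : Y, (j ⁻¹' (j '' (Metric.ball z (1 / (n + 1)))ᶜ))ᶜ with hSdef
    have hopen : ∀ n, IsOpen (S n) := by
      intro n
      refine isOpen_iUnion fun z => ?_
      have hc : IsClosed (j '' (Metric.ball z (1 / (n + 1)))ᶜ) :=
        ((Metric.isOpen_ball.isClosed_compl).isCompact.image hj).isClosed
      exact (hc.preimage hj).isOpen_compl
    have hdense : ∀ n, Dense (S n) := by
      intro n
      rw [dense_iff_inter_open]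
      intro U hU ⟨y, hy⟩
      obtain ⟨δ, hδ, hball⟩ := Metric.isOpen_iff.1 hU y hy
      set ε : ℝ := 1 / (n + 1) with hε
      have hεpos : 0 < ε := by positivity
      set r : ℝ := min δ ε with hr
      have hrpos : 0 < r := lt_min hδ hεpos
      have hFne : (Metric.ball y r)ᶜ ⊂ Set.univ := by
        rw [Set.ssubset_univ_iff]
        intro hcontra
        have : y ∈ (Metric.ball y r)ᶜ := hcontra ▸ Set.mem_univ y
        exact this (Metric.mem_ball_self hrpos)
      have himg := h _ Metric.isOpen_ball.isClosed_compl hFne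
      rw [Set.ssubset_univ_iff, Set.ne_univ_iff_exists_notMem] at himg
      obtain ⟨x, hx⟩ := himg
      obtain ⟨w, hw⟩ := hjs x
      have hwball : w ∈ Metric.ball y r := by
        by_contra hwb
        exact hx ⟨w, hwb, hw⟩
      refine ⟨w, hball (Metric.ball_subset_ball (min_le_left δ ε) hwball), ?_⟩
      refine Set.mem_iUnion.2 ⟨y, fun hmem => ?_⟩
      obtain ⟨v, hv, hjv⟩ := hmem
      refine hx ⟨v, fun hvball => hv (Metric.ball_subset_ball (min_le_right δ ε) hvball),
        by rw [hjv, hw]⟩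
    have hD : Dense (⋂ n, S n) := dense_iInter_of_isOpen hopen hdense
    refine hD.mono fun y hy => ?_
    have key : ∀ w, j w = j y → w = y := by
      intro w hjw
      have hdist : ∀ n : ℕ, dist w y < 2 * (1 / (n + 1)) := by
        intro n
        have hyn : y ∈ S n := Set.mem_iInter.1 hy n
        obtain ⟨z, hz⟩ := Set.mem_iUnion.1 hyn
        have hfib : ∀ v, j v = j y → v ∈ Metric.ball z (1 / (n + 1)) := by
          intro v hv
          by_contra hvb
          exact hz ⟨v, hvb, hv⟩
        have h1 := hfib w hjw
        have h2 := hfib y rfl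
        calc dist w y ≤ dist w z + dist z y := dist_triangle w z y
          _ < 1 / (n + 1) + 1 / (n + 1) := by
              rw [Metric.mem_ball] at h1 h2
              rw [dist_comm z y] at *
              linarith
          _ = 2 * (1 / (n + 1)) := by ring
      have hle : dist w y ≤ 0 := by
        by_contra hlt
        push_neg at hlt
        obtain ⟨n, hn⟩ := exists_nat_one_div_lt (half_pos hlt)
        have := hdist n
        have : dist w y < 2 * (dist w y / 2) := by
          calc dist w y < 2 * (1 / (n + 1)) := hdist n
            _ < 2 * (dist w y / 2) := by
                have : (1 : ℝ) / (n + 1) < dist w y / 2 := by exact_mod_cast hn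
                linarith
        linarith
      exact eq_of_dist_eq_zero (le_antisymm hle dist_nonneg)
    ext w
    simp only [Set.mem_preimage, Set.mem_singleton_iff]
    exact ⟨key w, fun hwy => hwy ▸ rfl⟩
  · intro hd F hF hFp
    rw [Set.ssubset_univ_iff] at hFp ⊢
    obtain ⟨y₀, hy₀⟩ := (Set.ne_univ_iff_exists_notMem _).1 hFp
    obtain ⟨y, hyF, hyfib⟩ := dense_iff_inter_open.1 hd Fᶜ hF.isOpen_compl ⟨y₀, hy₀⟩
    rw [Set.ne_univ_iff_exists_notMem]
    refine ⟨j y, fun ⟨z, hzF, hzj⟩ => ?_⟩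
    have : z ∈ ({y} : Set Y) := hyfib ▸ hzj
    exact hyF (this ▸ hzF)
end

section
/- Let j : Y → X be a continuous surjection of compact Hausdorff spaces. If j is almost one-to-one, then j is irreducible. -/
/-- For a continuous surjection of compact Hausdorff spaces, almost one-to-one implies
irreducible. -/
theorem irreducible_of_almost_one_to_one {Y X : Type*}
    [TopologicalSpace Y] [CompactSpace Y] [T2Space Y]
    [TopologicalSpace X] [CompactSpace X] [T2Space X]
    (j : Y → X) (hj : Continuous j) (hjs : Function.Surjective j)
    (h : Dense {y : Y | j ⁻¹' {j y} = {y}}) :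
    ∀ F : Set Y, IsClosed F → F ⊂ Set.univ → j '' F ⊂ Set.univ := by
  intro F hF hFs
  rw [Set.ssubset_univ_iff] at hFs ⊢
  intro hIm
  have hopen : IsOpen Fᶜ := hF.isOpen_compl
  have hne : Fᶜ.Nonempty := by
    rw [Set.nonempty_compl]; exact hFs
  obtain ⟨y, hy1, hy2⟩ := h.exists_mem_open hopen hne
  have : j y ∈ j '' F := by rw [hIm]; trivial
  obtain ⟨y', hy'F, hy'⟩ := this
  have : y' ∈ j ⁻¹' {j y} := hy'
  rw [hy1] at this
  rw [this] at hy'F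
  exact hy2 hy'F
end

section
/- Let j : Y → X be a continuous surjection of compact Hausdorff spaces, and suppose the set X₁ = {x ∈ X : the fiber j⁻¹(x) is a singleton} is dense in X. Then K = closure(j⁻¹(X₁)) is the unique minimal closed subset of Y such that j(K) = X: j(K) = X, K is contained in every closed F ⊆ Y with j(F) = X, and K is the unique closed set with full image that is minimal among such sets. -/
/-- If the set `X₁` of points of `X` with singleton fiber is dense, then
`K = closure (j⁻¹(X₁))` is the unique minimal closed subset of `Y` with `j(K) = X`:
it has full image, is contained in every closed set with full image, is minimal, and is
the unique minimal such set. -/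
theorem closure_preimage_singleton_fibers_unique_minimal {Y X : Type*}
    [TopologicalSpace Y] [CompactSpace Y] [T2Space Y]
    [TopologicalSpace X] [CompactSpace X] [T2Space X]
    (j : Y → X) (hj : Continuous j) (hjs : Function.Surjective j)
    (X₁ : Set X) (hX₁ : X₁ = {x : X | ∃! y : Y, j y = x}) (hd : Dense X₁)
    (K : Set Y) (hK : K = closure (j ⁻¹' X₁)) :
    j '' K = Set.univ ∧
      (∀ F : Set Y, IsClosed F → j '' F = Set.univ → K ⊆ F) ∧
      (∀ F ⊆ K, IsClosed F → j '' F = Set.univ → F = K) ∧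
      (∀ L : Set Y, IsClosed L → j '' L = Set.univ →
        (∀ F ⊆ L, IsClosed F → j '' F = Set.univ → F = L) → L = K) := by
  have hKc : IsClosed K := hK ▸ isClosed_closure
  -- Part 2: K is contained in every closed set with full image
  have h2 : ∀ F : Set Y, IsClosed F → j '' F = Set.univ → K ⊆ F := by
    intro F hF hFimg
    rw [hK]
    refine closure_minimal ?_ hF
    intro y hy
    rw [hX₁] at hy
    have : j y ∈ Set.univ := trivial
    rw [← hFimg] at this
    obtain ⟨w, hwF, hw⟩ := this
    have : w = y := hy.unique hw rfl
    rwa [← this]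
  -- Part 1: j '' K = univ
  have h1 : j '' K = Set.univ := by
    have hcl : IsClosed (j '' K) := (hKc.isCompact.image hj).isClosed
    have hsub : X₁ ⊆ j '' K := by
      intro x hx
      have hx' := hx
      rw [hX₁] at hx'
      obtain ⟨y, hy, -⟩ := hx'
      exact ⟨y, hK ▸ subset_closure (by simp [Set.mem_preimage, hy, hx]), hy⟩
    have := closure_minimal hsub hcl
    rw [hd.closure_eq] at this
    exact Set.univ_subset_iff.mp this
  refine ⟨h1, h2, ?_, ?_⟩
  · intro F hFK hF hFimg
    exact Set.Subset.antisymm hFK (h2 F hF hFimg)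
  · intro L hL hLimg hLmin
    exact (hLmin K (h2 L hL hLimg) hKc h1).symm
end

section
/- Let Y = ([0,1] × {0}) ∪ ({1} × [0,1]) ⊆ ℝ², X = [0,1] ⊆ ℝ, and j : Y → X the map j(x,y) = x. Then j is not almost one-to-one: the closure of the set {p ∈ Y : j⁻¹(j(p)) = {p}} equals [0,1] × {0}, which is a proper subset of Y. Nevertheless, the set {x ∈ X : j⁻¹(x) is a singleton} equals [0,1), which is dense in X. -/
/-- The space `Y = ([0,1] × {0}) ∪ ({1} × [0,1]) ⊆ ℝ²`. -/
def Yset : Set (ℝ × ℝ) := (Set.Icc 0 1 ×ˢ ({0} : Set ℝ)) ∪ (({1} : Set ℝ) ×ˢ Set.Icc 0 1)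

/-- The space `X = [0,1] ⊆ ℝ`. -/
def Xset : Set ℝ := Set.Icc 0 1

/-- The projection `j : Y → X`, `j(x,y) = x`. -/
def jmap (p : ↥Yset) : ↥Xset := ⟨p.val.1, by
  rcases p.property with h | h
  · exact h.1
  · have h1 : p.val.1 = 1 := h.1
    rw [Xset, h1]
    exact Set.right_mem_Icc.mpr zero_le_one⟩

lemma jmap_val (p : ↥Yset) : (jmap p).val = p.val.1 := rfl

lemma mem_left_of_lt_one (p : ↥Yset) (h : p.val.1 < 1) :
    p.val ∈ Set.Icc (0:ℝ) 1 ×ˢ ({0} : Set ℝ) := by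
  rcases p.property with hp | hp
  · exact hp
  · exact absurd hp.1 (ne_of_lt h)

lemma S_eq : {p : ↥Yset | jmap ⁻¹' {jmap p} = {p}} =
    Subtype.val ⁻¹' (Set.Ico (0:ℝ) 1 ×ˢ ({0} : Set ℝ)) := by
  ext p
  simp only [Set.mem_setOf_eq, Set.mem_preimage, Set.mem_prod, Set.mem_Ico,
    Set.mem_singleton_iff]
  constructor
  · intro h
    by_cases hlt : p.val.1 < 1
    · have hm := mem_left_of_lt_one p hlt
      exact ⟨⟨hm.1.1, hlt⟩, hm.2⟩
    · exfalso
      have h1 : p.val.1 = 1 := by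
        rcases p.property with hp | hp
        · exact le_antisymm hp.1.2 (not_lt.mp hlt)
        · exact hp.1
      have q0 : ((1:ℝ), (0:ℝ)) ∈ Yset := Or.inl ⟨Set.right_mem_Icc.mpr zero_le_one, rfl⟩
      have q1 : ((1:ℝ), (1:ℝ)) ∈ Yset := Or.inr ⟨rfl, Set.right_mem_Icc.mpr zero_le_one⟩
      have h0 : (⟨_, q0⟩ : ↥Yset) ∈ jmap ⁻¹' {jmap p} := by
        simp only [Set.mem_preimage, Set.mem_singleton_iff]
        exact Subtype.ext (by simp [jmap_val, h1])
      have h1' : (⟨_, q1⟩ : ↥Yset) ∈ jmap ⁻¹' {jmap p} := by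
        simp only [Set.mem_preimage, Set.mem_singleton_iff]
        exact Subtype.ext (by simp [jmap_val, h1])
      rw [h] at h0 h1'
      have : ((1:ℝ), (0:ℝ)) = ((1:ℝ), (1:ℝ)) := by
        have := h0.trans h1'.symm
        exact congrArg Subtype.val this
      simp at this
  · rintro ⟨⟨h0, h1⟩, h2⟩
    ext q
    simp only [Set.mem_preimage, Set.mem_singleton_iff]
    constructor
    · intro hq
      have hq1 : q.val.1 = p.val.1 := congrArg Subtype.val hq
      have hqlt : q.val.1 < 1 := hq1 ▸ h1
      have hm := mem_left_of_lt_one q hqlt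
      exact Subtype.ext (Prod.ext (by rw [hq1]) (by rw [hm.2, h2]))
    · intro hq; rw [hq]

lemma fiber_eq : {x : ↥Xset | ∃! p : ↥Yset, jmap p = x} =
    Subtype.val ⁻¹' Set.Ico 0 1 := by
  ext x
  simp only [Set.mem_setOf_eq, Set.mem_preimage, Set.mem_Ico]
  constructor
  · rintro ⟨p, hp, hu⟩
    by_contra hc
    have h1 : x.val = 1 := by
      have hx : x.val ∈ Set.Icc (0:ℝ) 1 := x.property
      rcases not_and_or.mp hc with h | h
      · exact absurd hx.1 h
      · exact le_antisymm hx.2 (not_lt.mp h)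
    have q0 : ((1:ℝ), (0:ℝ)) ∈ Yset := Or.inl ⟨Set.right_mem_Icc.mpr zero_le_one, rfl⟩
    have q1 : ((1:ℝ), (1:ℝ)) ∈ Yset := Or.inr ⟨rfl, Set.right_mem_Icc.mpr zero_le_one⟩
    have e0 : jmap ⟨_, q0⟩ = x := Subtype.ext (by simp [jmap_val, h1])
    have e1 : jmap ⟨_, q1⟩ = x := Subtype.ext (by simp [jmap_val, h1])
    have := (hu _ e0).trans (hu _ e1).symm
    have : ((1:ℝ), (0:ℝ)) = ((1:ℝ), (1:ℝ)) := congrArg Subtype.val this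
    simp at this
  · rintro ⟨h0, h1⟩
    have hm : (x.val, (0:ℝ)) ∈ Yset := Or.inl ⟨⟨h0, le_of_lt h1⟩, rfl⟩
    refine ⟨⟨_, hm⟩, Subtype.ext rfl, ?_⟩
    intro q hq
    have hq1 : q.val.1 = x.val := congrArg Subtype.val hq
    have hqlt : q.val.1 < 1 := hq1 ▸ h1
    have hml := mem_left_of_lt_one q hqlt
    exact Subtype.ext (Prod.ext hq1 hml.2)

/-- `j` is not almost one-to-one: the closure of `{p ∈ Y : j⁻¹(j(p)) = {p}}` is
`[0,1] × {0}`, a proper subset of `Y`. Nevertheless the set of points of `X` with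
singleton fiber is `[0,1)`, which is dense in `X`. -/
theorem example_not_almost_one_to_one :
    closure {p : ↥Yset | jmap ⁻¹' {jmap p} = {p}} =
        Subtype.val ⁻¹' (Set.Icc 0 1 ×ˢ ({0} : Set ℝ)) ∧
    (Subtype.val ⁻¹' (Set.Icc 0 1 ×ˢ ({0} : Set ℝ)) : Set ↥Yset) ⊂ Set.univ ∧
    {x : ↥Xset | ∃! p : ↥Yset, jmap p = x} = Subtype.val ⁻¹' Set.Ico 0 1 ∧
    Dense {x : ↥Xset | ∃! p : ↥Yset, jmap p = x} := by
  refine ⟨?_, ?_, fiber_eq, ?_⟩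
  · rw [S_eq]
    ext p
    rw [closure_subtype]
    have himg : Subtype.val '' (Subtype.val ⁻¹' (Set.Ico (0:ℝ) 1 ×ˢ ({0} : Set ℝ)) : Set ↥Yset)
        = Set.Ico (0:ℝ) 1 ×ˢ ({0} : Set ℝ) := by
      rw [Set.image_preimage_eq_inter_range, Subtype.range_coe]
      apply Set.inter_eq_self_of_subset_left
      rintro ⟨a, b⟩ ⟨⟨ha0, ha1⟩, hb⟩
      exact Or.inl ⟨⟨ha0, le_of_lt ha1⟩, hb⟩
    rw [himg, closure_prod_eq, closure_Ico (by norm_num : (0:ℝ) ≠ 1), closure_singleton]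
    rfl
  · constructor
    · exact Set.subset_univ _
    · intro h
      have q1 : ((1:ℝ), (1:ℝ)) ∈ Yset := Or.inr ⟨rfl, Set.right_mem_Icc.mpr zero_le_one⟩
      have := h (Set.mem_univ (⟨_, q1⟩ : ↥Yset))
      simp only [Set.mem_preimage, Set.mem_prod, Set.mem_singleton_iff] at this
      exact one_ne_zero this.2
  · rw [fiber_eq]
    intro x
    rw [closure_subtype]
    have hsub : Set.Ico (0:ℝ) 1 ⊆
        Subtype.val '' (Subtype.val ⁻¹' Set.Ico 0 1 : Set ↥Xset) := by
      intro y hy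
      exact ⟨⟨y, ⟨hy.1, le_of_lt hy.2⟩⟩, hy, rfl⟩
    have : (x : ℝ) ∈ closure (Set.Ico (0:ℝ) 1) := by
      rw [closure_Ico (by norm_num : (0:ℝ) ≠ 1)]
      exact x.property
    exact closure_mono hsub this
end

section
/- Let Ï be the split interval, i.e., the set ((0,1] × {0}) ∪ ([0,1) × {1}) ⊆ ℝ × ℝ equipped with the order topology arising from the lexicographic order (x,y) < (x',y') iff x < x', or x = x' and y < y'. Let I = [0,1] with its usual topology, and let j : Ï → I be j(x,y) = x. Then Ï is a compact Hausdorff space, j is a continuous irreducible surjection, and the set {x ∈ I : j⁻¹(x) is a singleton} equals {0, 1}, which is not dense in I. -/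
/-- The split interval `((0,1] × {0}) ∪ ([0,1) × {1})`, as a subset of `ℝ ×ₗ ℝ`
(pairs of reals with the lexicographic order). -/
def SplitIntervalSet : Set (ℝ ×ₗ ℝ) :=
  {p | ((ofLex p).1 ∈ Set.Ioc (0 : ℝ) 1 ∧ (ofLex p).2 = 0) ∨
       ((ofLex p).1 ∈ Set.Ico (0 : ℝ) 1 ∧ (ofLex p).2 = 1)}

/-- The split interval carries the *order* topology of the (restricted) lexicographic
order, not the subspace topology from `ℝ × ℝ`. -/
instance : TopologicalSpace ↥SplitIntervalSet := Preorder.topology _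

instance : OrderTopology ↥SplitIntervalSet := ⟨rfl⟩

/-- The projection `j : Ï → [0,1]`, `j(x,y) = x`. -/
def splitProj (p : ↥SplitIntervalSet) : ↥(Set.Icc (0 : ℝ) 1) :=
  ⟨(ofLex p.val).1, by
    rcases p.property with h | h
    · exact ⟨h.1.1.le, h.1.2⟩
    · exact ⟨h.1.1, h.1.2.le⟩⟩

namespace SplitAux

open Set

/-- first coordinate of a point of the split interval -/
def fst (p : ↥SplitIntervalSet) : ℝ := (ofLex p.val).1

/-- second coordinate of a point of the split interval -/
def snd (p : ↥SplitIntervalSet) : ℝ := (ofLex p.val).2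

lemma prop' (p : ↥SplitIntervalSet) :
    (fst p ∈ Set.Ioc (0 : ℝ) 1 ∧ snd p = 0) ∨ (fst p ∈ Set.Ico (0 : ℝ) 1 ∧ snd p = 1) :=
  p.property

lemma fst_nonneg (p : ↥SplitIntervalSet) : 0 ≤ fst p := by
  rcases prop' p with h | h
  exacts [h.1.1.le, h.1.1]

lemma fst_le_one (p : ↥SplitIntervalSet) : fst p ≤ 1 := by
  rcases prop' p with h | h
  exacts [h.1.2, h.1.2.le]

lemma snd_nonneg (p : ↥SplitIntervalSet) : 0 ≤ snd p := by
  rcases prop' p with h | h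
  · rw [h.2]
  · rw [h.2]; norm_num

lemma snd_le_one (p : ↥SplitIntervalSet) : snd p ≤ 1 := by
  rcases prop' p with h | h
  · rw [h.2]; norm_num
  · rw [h.2]

lemma le_iff {p q : ↥SplitIntervalSet} :
    p ≤ q ↔ fst p < fst q ∨ (fst p = fst q ∧ snd p ≤ snd q) := by
  rw [← Subtype.coe_le_coe, ← toLex_ofLex (p : ℝ ×ₗ ℝ), ← toLex_ofLex (q : ℝ ×ₗ ℝ),
    Prod.Lex.le_iff]
  rfl

lemma lt_iff {p q : ↥SplitIntervalSet} :
    p < q ↔ fst p < fst q ∨ (fst p = fst q ∧ snd p < snd q) := by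
  rw [← Subtype.coe_lt_coe, ← toLex_ofLex (p : ℝ ×ₗ ℝ), ← toLex_ofLex (q : ℝ ×ₗ ℝ),
    Prod.Lex.lt_iff]
  rfl

lemma fst_mono {p q : ↥SplitIntervalSet} (h : p ≤ q) : fst p ≤ fst q := by
  rcases le_iff.mp h with h | h
  exacts [h.le, h.1.le]

lemma ext' {p q : ↥SplitIntervalSet} (h1 : fst p = fst q) (h2 : snd p = snd q) : p = q := by
  apply Subtype.ext
  have : (p : ℝ ×ₗ ℝ) = toLex (fst p, snd p) := rfl
  rw [this, h1, h2]
  rfl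

/-- the point `(x, 0)` of the split interval -/
def mk0 (x : ℝ) (h : x ∈ Set.Ioc (0 : ℝ) 1) : ↥SplitIntervalSet :=
  ⟨toLex (x, 0), Or.inl ⟨h, rfl⟩⟩

/-- the point `(x, 1)` of the split interval -/
def mk1 (x : ℝ) (h : x ∈ Set.Ico (0 : ℝ) 1) : ↥SplitIntervalSet :=
  ⟨toLex (x, 1), Or.inr ⟨h, rfl⟩⟩

@[simp] lemma fst_mk0 (x h) : fst (mk0 x h) = x := rfl
@[simp] lemma snd_mk0 (x h) : snd (mk0 x h) = 0 := rfl
@[simp] lemma fst_mk1 (x h) : fst (mk1 x h) = x := rfl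
@[simp] lemma snd_mk1 (x h) : snd (mk1 x h) = 1 := rfl

lemma bot_le' (b : ↥SplitIntervalSet) : mk1 0 ⟨le_rfl, zero_lt_one⟩ ≤ b := by
  rw [le_iff]
  rcases lt_or_eq_of_le (fst_nonneg b) with h | h
  · exact Or.inl h
  · refine Or.inr ⟨h, ?_⟩
    rcases prop' b with hb | hb
    · exact absurd h.symm (ne_of_gt hb.1.1)
    · rw [hb.2]; exact le_rfl

lemma bddAbove_fst (s : Set ↥SplitIntervalSet) : BddAbove (fst '' s) := by
  refine ⟨1, ?_⟩
  rintro y ⟨p, -, rfl⟩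
  exact fst_le_one p

open Classical in
/-- the supremum of a set in the split interval -/
noncomputable def sup' (s : Set ↥SplitIntervalSet) : ↥SplitIntervalSet :=
  if h : ∃ p ∈ s, snd p = 1 ∧ fst p = sSup (fst '' s) then
    mk1 (sSup (fst '' s)) (by
      obtain ⟨p, -, h1, h2⟩ := h
      rcases prop' p with hp | hp
      · rw [hp.2] at h1; norm_num at h1
      · exact h2 ▸ hp.1)
  else if h0 : s.Nonempty ∧ 0 < sSup (fst '' s) then
    mk0 (sSup (fst '' s))
      ⟨h0.2, csSup_le (h0.1.image _) (by rintro y ⟨p, -, rfl⟩; exact fst_le_one p)⟩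
  else mk1 0 ⟨le_rfl, zero_lt_one⟩

lemma isLUB_sup' (s : Set ↥SplitIntervalSet) : IsLUB s (sup' s) := by
  classical
  constructor
  · intro p hp
    have hpx : fst p ≤ sSup (fst '' s) := le_csSup (bddAbove_fst s) ⟨p, hp, rfl⟩
    unfold sup'
    split_ifs with h h0
    · rw [le_iff]
      rcases lt_or_eq_of_le hpx with hlt | heq
      · exact Or.inl (by simpa using hlt)
      · exact Or.inr ⟨by simpa using heq, by simpa using snd_le_one p⟩
    · rw [le_iff]
      rcases lt_or_eq_of_le hpx with hlt | heq
      · exact Or.inl hlt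
      · refine Or.inr ⟨heq, ?_⟩
        rcases prop' p with hp2 | hp2
        · rw [hp2.2]; exact le_rfl
        · exact absurd ⟨p, hp, hp2.2, heq⟩ h
    · exfalso
      have hx0 : sSup (fst '' s) ≤ 0 :=
        not_lt.mp fun hpos => h0 ⟨⟨p, hp⟩, hpos⟩
      have hfp : fst p = 0 := le_antisymm (hpx.trans hx0) (fst_nonneg p)
      have hsnd : snd p = 1 := by
        rcases prop' p with hp2 | hp2
        · exact absurd hfp (ne_of_gt hp2.1.1)
        · exact hp2.2
      exact h ⟨p, hp, hsnd, le_antisymm (hfp ▸ hpx) hx0 ▸ hfp⟩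
  · intro b hb
    unfold sup'
    split_ifs with h h0
    · obtain ⟨p, hps, h1, h2⟩ := h
      have : mk1 (sSup (fst '' s))
          (by obtain ⟨p, -, h1, h2⟩ :
                ∃ p ∈ s, snd p = 1 ∧ fst p = sSup (fst '' s) := ⟨p, hps, h1, h2⟩
              rcases prop' p with hp | hp
              · rw [hp.2] at h1; norm_num at h1
              · exact h2 ▸ hp.1) = p := ext' (by simpa using h2.symm) (by simpa using h1.symm)
      rw [this]
      exact hb hps
    · have hxb : sSup (fst '' s) ≤ fst b := by
        refine csSup_le (h0.1.image _) ?_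
        rintro y ⟨p, hp, rfl⟩
        exact fst_mono (hb hp)
      rw [le_iff]
      rcases lt_or_eq_of_le hxb with hlt | heq
      · exact Or.inl hlt
      · exact Or.inr ⟨heq, snd_nonneg b⟩
    · exact bot_le' b

noncomputable instance : SupSet ↥SplitIntervalSet := ⟨sup'⟩

noncomputable instance : CompleteLattice ↥SplitIntervalSet :=
  { (inferInstance : Lattice ↥SplitIntervalSet), completeLatticeOfSup _ isLUB_sup' with }

noncomputable instance : CompleteLinearOrder ↥SplitIntervalSet :=
  { (inferInstance : CompleteLattice ↥SplitIntervalSet), Subtype.instLinearOrder _,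
    LinearOrder.toBiheytingAlgebra _ with }

lemma splitProj_mono : Monotone splitProj := by
  intro p q h
  exact Subtype.mk_le_mk.mpr (fst_mono h)

lemma splitProj_surj : Function.Surjective splitProj := by
  rintro ⟨x, hx0, hx1⟩
  rcases lt_or_eq_of_le hx0 with h | h
  · exact ⟨mk0 x ⟨h, hx1⟩, Subtype.ext rfl⟩
  · exact ⟨mk1 0 ⟨le_rfl, zero_lt_one⟩, Subtype.ext h⟩

lemma fiber_exists {F : Set ↥SplitIntervalSet} (h : splitProj '' F = Set.univ)
    {y : ℝ} (hy : y ∈ Set.Icc (0 : ℝ) 1) : ∃ q ∈ F, fst q = y := by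
  have : (⟨y, hy⟩ : ↥(Set.Icc (0 : ℝ) 1)) ∈ splitProj '' F := h ▸ Set.mem_univ _
  obtain ⟨q, hq, hq2⟩ := this
  exact ⟨q, hq, congrArg Subtype.val hq2⟩

lemma dense_fibers {F : Set ↥SplitIntervalSet} (hF : IsClosed F)
    (h : splitProj '' F = Set.univ) : F = Set.univ := by
  ext p
  simp only [Set.mem_univ, iff_true]
  rcases prop' p with hp | hp
  · -- `p = (x, 0)` with `x ∈ (0, 1]`: `p` is the LUB of `F ∩ Iio p`
    have hne : (F ∩ Set.Iio p).Nonempty := by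
      obtain ⟨q, hq, hq2⟩ := fiber_exists h (y := fst p / 2)
        ⟨by linarith [hp.1.1], by linarith [hp.1.2, hp.1.1]⟩
      exact ⟨q, hq, lt_iff.mpr (Or.inl (by rw [hq2]; linarith [hp.1.1]))⟩
    have hlub : IsLUB (F ∩ Set.Iio p) p := by
      constructor
      · exact fun q hq => le_of_lt hq.2
      · intro b hb
        by_contra hbp
        have hbp' : b < p := not_le.mp hbp
        have hfb : fst b < fst p := by
          rcases lt_iff.mp hbp' with h' | h'
          · exact h'
          · exfalso; have := snd_nonneg b; rw [hp.2] at h'; linarith [h'.2]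
        set y := (max (fst b) 0 + fst p) / 2 with hy
        have hmax : max (fst b) 0 < fst p := max_lt hfb hp.1.1
        have hy1 : max (fst b) 0 < y := by rw [hy]; linarith
        have hy2 : y < fst p := by rw [hy]; linarith
        obtain ⟨q, hq, hq2⟩ := fiber_exists h (y := y)
          ⟨le_of_lt (lt_of_le_of_lt (le_max_right _ _) hy1), by linarith [hp.1.2]⟩
        have hqp : q < p := lt_iff.mpr (Or.inl (by rw [hq2]; exact hy2))
        have h3 : fst q ≤ fst b := fst_mono (hb ⟨hq, hqp⟩)
        have h4 : fst b < y := lt_of_le_of_lt (le_max_left _ _) hy1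
        rw [hq2] at h3
        linarith
    have hcl : p ∈ closure (F ∩ Set.Iio p) := hlub.mem_closure hne
    have := closure_mono Set.inter_subset_left hcl
    rwa [hF.closure_eq] at this
  · -- `p = (x, 1)` with `x ∈ [0, 1)`: `p` is the GLB of `F ∩ Ioi p`
    have hne : (F ∩ Set.Ioi p).Nonempty := by
      obtain ⟨q, hq, hq2⟩ := fiber_exists h (y := (fst p + 1) / 2)
        ⟨by linarith [hp.1.1], by linarith [hp.1.2]⟩
      exact ⟨q, hq, lt_iff.mpr (Or.inl (by rw [hq2]; linarith [hp.1.2]))⟩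
    have hglb : IsGLB (F ∩ Set.Ioi p) p := by
      constructor
      · exact fun q hq => le_of_lt hq.2
      · intro b hb
        by_contra hbp
        have hbp' : p < b := not_le.mp hbp
        have hfb : fst p < fst b := by
          rcases lt_iff.mp hbp' with h' | h'
          · exact h'
          · exfalso; have := snd_le_one b; rw [hp.2] at h'; linarith [h'.2]
        set y := (fst p + min (fst b) 1) / 2 with hy
        have hmin : fst p < min (fst b) 1 := lt_min hfb hp.1.2
        have hy1 : y < min (fst b) 1 := by rw [hy]; linarith
        have hy2 : fst p < y := by rw [hy]; linarith
        obtain ⟨q, hq, hq2⟩ := fiber_exists h (y := y)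
          ⟨by linarith [hp.1.1], le_of_lt (lt_of_lt_of_le hy1 (min_le_right _ _))⟩
        have hqp : p < q := lt_iff.mpr (Or.inl (by rw [hq2]; exact hy2))
        have h3 : fst b ≤ fst q := fst_mono (hb ⟨hq, hqp⟩)
        have h4 : y < fst b := lt_of_lt_of_le hy1 (min_le_left _ _)
        rw [hq2] at h3
        linarith
    have hcl : p ∈ closure (F ∩ Set.Ioi p) := hglb.mem_closure hne
    have := closure_mono Set.inter_subset_left hcl
    rwa [hF.closure_eq] at this

lemma fiber_eq :
    {x : ↥(Set.Icc (0 : ℝ) 1) | ∃! p : ↥SplitIntervalSet, splitProj p = x} =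
      {⟨0, Set.left_mem_Icc.mpr zero_le_one⟩, ⟨1, Set.right_mem_Icc.mpr zero_le_one⟩} := by
  ext x
  simp only [Set.mem_setOf_eq, Set.mem_insert_iff, Set.mem_singleton_iff]
  constructor
  · rintro ⟨p, hp, hu⟩
    by_contra hc
    push_neg at hc
    obtain ⟨h0, h1⟩ := hc
    have hx0 : 0 < x.val := lt_of_le_of_ne x.2.1 fun e => h0 (Subtype.ext e.symm)
    have hx1 : x.val < 1 := lt_of_le_of_ne x.2.2 fun e => h1 (Subtype.ext e)
    have e1 : splitProj (mk0 x.val ⟨hx0, x.2.2⟩) = x := Subtype.ext rfl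
    have e2 : splitProj (mk1 x.val ⟨x.2.1, hx1⟩) = x := Subtype.ext rfl
    have heq : mk0 x.val ⟨hx0, x.2.2⟩ = mk1 x.val ⟨x.2.1, hx1⟩ :=
      (hu _ e1).trans (hu _ e2).symm
    have := congrArg snd heq
    change (0:ℝ) = 1 at this; norm_num at this
  · rintro (rfl | rfl)
    · refine ⟨mk1 0 ⟨le_rfl, zero_lt_one⟩, Subtype.ext rfl, ?_⟩
      intro q hq
      have hfq : fst q = 0 := congrArg Subtype.val hq
      rcases prop' q with hq2 | hq2
      · exact absurd hfq (ne_of_gt hq2.1.1)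
      · exact ext' hfq hq2.2
    · refine ⟨mk0 1 ⟨zero_lt_one, le_rfl⟩, Subtype.ext rfl, ?_⟩
      intro q hq
      have hfq : fst q = 1 := congrArg Subtype.val hq
      rcases prop' q with hq2 | hq2
      · exact ext' hfq hq2.2
      · exact absurd hfq (ne_of_lt hq2.1.2)

end SplitAux

/-- The split interval is compact Hausdorff, and the projection `j : Ï → [0,1]` is a
continuous irreducible surjection, yet the set of points of `[0,1]` with singleton fiber
is `{0, 1}`, which is not dense. -/
theorem split_interval_irreducible_not_almost_one_to_one :
    CompactSpace ↥SplitIntervalSet ∧ T2Space ↥SplitIntervalSet ∧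
    Continuous splitProj ∧ Function.Surjective splitProj ∧
    (∀ F : Set ↥SplitIntervalSet, IsClosed F → F ⊂ Set.univ →
      splitProj '' F ⊂ Set.univ) ∧
    {x : ↥(Set.Icc (0 : ℝ) 1) | ∃! p : ↥SplitIntervalSet, splitProj p = x} =
      {⟨0, Set.left_mem_Icc.mpr zero_le_one⟩, ⟨1, Set.right_mem_Icc.mpr zero_le_one⟩} ∧
    ¬ Dense {x : ↥(Set.Icc (0 : ℝ) 1) | ∃! p : ↥SplitIntervalSet, splitProj p = x} := by
  refine ⟨inferInstance, inferInstance,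
    SplitAux.splitProj_mono.continuous_of_surjective SplitAux.splitProj_surj,
    SplitAux.splitProj_surj, ?_, SplitAux.fiber_eq, ?_⟩
  · intro F hF hFss
    rw [Set.ssubset_univ_iff] at hFss ⊢
    exact fun himg => hFss (SplitAux.dense_fibers hF himg)
  · rw [SplitAux.fiber_eq]
    intro hd
    have hhalf := hd.closure_eq ▸ Set.mem_univ
      (⟨1 / 2, by norm_num, by norm_num⟩ : ↥(Set.Icc (0 : ℝ) 1))
    rw [((Set.finite_singleton _).insert _).isClosed.closure_eq] at hhalf
    simp only [Set.mem_insert_iff, Set.mem_singleton_iff, Subtype.ext_iff] at hhalf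
    norm_num at hhalf
end

section
/- Let j : Y → X be a continuous surjection of compact Hausdorff spaces and suppose K ⊆ Y is the unique minimal closed set with j(K) = X. Let U ⊆ Y be an open set containing K and let F ⊊ X be a proper closed subset. Then j(Y \ U) ∪ F is a proper subset of X. -/
open Set

/-- Any closed set with full image contains a minimal such set. -/
lemma exists_min_closed_full {Y X : Type*} [TopologicalSpace Y] [CompactSpace Y]
    [TopologicalSpace X] [T1Space X] {j : Y → X} (hj : Continuous j)
    (C : Set Y) (hC : IsClosed C) (hCfull : j '' C = Set.univ) :
    ∃ L ⊆ C, IsClosed L ∧ j '' L = Set.univ ∧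
      ∀ F ⊆ L, IsClosed F → j '' F = Set.univ → F = L := by
  let S : Set (Set Y) := {L | L ⊆ C ∧ IsClosed L ∧ j '' L = Set.univ}
  have H : ∀ c ⊆ S, IsChain (· ⊆ ·) c → c.Nonempty → ∃ lb ∈ S, ∀ s ∈ c, lb ⊆ s := by
    intro c hcS hchain hcne
    refine ⟨⋂₀ c, ⟨?_, ?_, ?_⟩, fun s hs => sInter_subset_of_mem hs⟩
    · exact (sInter_subset_of_mem hcne.some_mem).trans (hcS hcne.some_mem).1
    · exact isClosed_sInter fun s hs => (hcS hs).2.1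
    · refine eq_univ_of_forall fun a => ?_
      have : (⋂ s : c, ((s : Set Y) ∩ j ⁻¹' {a})).Nonempty := by
        have := hcne
        have hne : Nonempty c := hcne.to_subtype
        apply IsCompact.nonempty_iInter_of_directed_nonempty_isCompact_isClosed
        · rintro ⟨s, hs⟩ ⟨t, ht⟩
          rcases hchain.total hs ht with h | h
          · exact ⟨⟨s, hs⟩, inter_subset_inter_left _ subset_rfl,
              inter_subset_inter_left _ h⟩
          · exact ⟨⟨t, ht⟩, inter_subset_inter_left _ h,
              inter_subset_inter_left _ subset_rfl⟩
        · rintro ⟨s, hs⟩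
          have := (hcS hs).2.2
          have ha : a ∈ j '' s := this ▸ mem_univ a
          rcases ha with ⟨y, hy, rfl⟩
          exact ⟨y, hy, rfl⟩
        · rintro ⟨s, hs⟩
          exact (((hcS hs).2.1).inter (isClosed_singleton.preimage hj)).isCompact
        · rintro ⟨s, hs⟩
          exact ((hcS hs).2.1).inter (isClosed_singleton.preimage hj)
      rcases this with ⟨y, hy⟩
      simp only [mem_iInter, mem_inter_iff, mem_preimage, mem_singleton_iff] at hy
      refine ⟨y, fun s hs => (hy ⟨s, hs⟩).1, (hy ⟨_, hcne.some_mem⟩).2⟩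
  obtain ⟨L, hLC, hLmin⟩ := zorn_superset_nonempty S H C ⟨subset_rfl, hC, hCfull⟩
  obtain ⟨hL1, hL2, hL3⟩ := hLmin.prop
  refine ⟨L, hL1, hL2, hL3, fun G hGL hGc hGfull => ?_⟩
  exact (hLmin.eq_of_subset ⟨hGL.trans hL1, hGc, hGfull⟩ hGL)

/-- If `K` is the unique minimal closed subset of `Y` with `j(K) = X`, `U` is an open set
containing `K`, and `F ⊊ X` is a proper closed subset, then `j(Y \ U) ∪ F ⊊ X`. -/
theorem image_compl_union_proper {Y X : Type*}
    [TopologicalSpace Y] [CompactSpace Y] [T2Space Y]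
    [TopologicalSpace X] [CompactSpace X] [T2Space X]
    (j : Y → X) (hj : Continuous j) (hjs : Function.Surjective j)
    (K : Set Y) (hKc : IsClosed K) (hKfull : j '' K = Set.univ)
    (hKmin : ∀ F ⊆ K, IsClosed F → j '' F = Set.univ → F = K)
    (hKuniq : ∀ L : Set Y, IsClosed L → j '' L = Set.univ →
      (∀ F ⊆ L, IsClosed F → j '' F = Set.univ → F = L) → L = K)
    (U : Set Y) (hU : IsOpen U) (hKU : K ⊆ U)
    (F : Set X) (hF : IsClosed F) (hFp : F ⊂ Set.univ) :
    j '' (Set.univ \ U) ∪ F ⊂ Set.univ := by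
  rw [ssubset_univ_iff]
  intro hcontra
  set C : Set Y := (Set.univ \ U) ∪ j ⁻¹' F with hCdef
  have hCc : IsClosed C := by
    apply IsClosed.union
    · simpa [Set.compl_eq_univ_diff] using hU.isClosed_compl
    · exact hF.preimage hj
  have hCfull : j '' C = Set.univ := by
    apply eq_univ_of_univ_subset
    rw [← hcontra]
    rintro x (hx | hx)
    · rcases hx with ⟨y, hy, rfl⟩
      exact ⟨y, Or.inl hy, rfl⟩
    · rcases hjs x with ⟨y, rfl⟩
      exact ⟨y, Or.inr hx, rfl⟩
  obtain ⟨L, hLC, hLc, hLfull, hLmin⟩ := exists_min_closed_full hj C hCc hCfull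
  have hLK : L = K := hKuniq L hLc hLfull hLmin
  subst hLK
  have : L ⊆ j ⁻¹' F := by
    intro y hy
    rcases hLC hy with h | h
    · exact absurd (hKU hy) h.2
    · exact h
  have : j '' L ⊆ F := image_subset_iff.mpr this
  rw [hLfull] at this
  exact hFp.ne (univ_subset_iff.mp this)
end

section
/- Let j : Y → X be a continuous surjection of compact Hausdorff spaces and suppose K ⊆ Y is the unique minimal closed set with j(K) = X. Let g : Y → ℂ be continuous with g vanishing on K, let ε > 0, and let F ⊊ X be a proper closed subset. Then there exists a continuous function f : X → ℝ with 0 ≤ f ≤ 1, sup-norm ‖f‖ = 1, f vanishing on F, such that the continuous function (f ∘ j) · g · (f ∘ j) on Y has sup-norm strictly less than ε. -/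
open Set

/-- Any closed set with full image contains a minimal closed set with full image. -/
lemma exists_minimal_closed_full_image {Y X : Type*}
    [TopologicalSpace Y] [CompactSpace Y] [TopologicalSpace X] [T1Space X]
    (j : Y → X) (hj : Continuous j) (C : Set Y) (hC : IsClosed C)
    (hCfull : j '' C = univ) :
    ∃ L ⊆ C, IsClosed L ∧ j '' L = univ ∧
      ∀ E ⊆ L, IsClosed E → j '' E = univ → E = L := by
  let S : Set (Set Y) := {E : Set Y | IsClosed E ∧ j '' E = univ}
  have H : ∀ c ⊆ S, IsChain (· ⊆ ·) c → c.Nonempty → ∃ lb ∈ S, ∀ s ∈ c, lb ⊆ s := by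
    intro c c_sub c_chain hc
    refine ⟨⋂ s : c, (s : Set Y), ⟨isClosed_iInter fun ⟨_, h⟩ => (c_sub h).1, ?_⟩,
      fun s hs _ h => mem_iInter.mp h ⟨s, hs⟩⟩
    have : Nonempty c := hc.to_subtype
    refine eq_univ_of_forall fun a => inter_nonempty_iff_exists_left.mp ?_
    refine iInter_inter (ι := c) (j ⁻¹' {a}) _ ▸
      IsCompact.nonempty_iInter_of_directed_nonempty_isCompact_isClosed _
      ?_ (fun s => ?_) (fun s => IsClosed.isCompact ?_) (fun s => ?_)
    · replace c_chain : IsChain (· ⊇ ·) c := c_chain.symm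
      have : ∀ s t : Set Y, s ⊇ t → s ∩ j ⁻¹' {a} ⊇ t ∩ j ⁻¹' {a} := fun _ _ => inter_subset_inter_left <| j ⁻¹' {a}
      exact Directed.mono_comp (α := Set Y) (· ⊇ ·) (g := fun s => s ∩ j ⁻¹' {a}) (fun _ _ => this _ _) (directedOn_iff_directed.mp c_chain.directedOn)
    · rw [← image_inter_nonempty_iff, (c_sub s.2).2, univ_inter]
      exact singleton_nonempty a
    all_goals exact (c_sub s.2).1.inter <| (T1Space.t1 a).preimage hj
  obtain ⟨L, hLC, hLmem, hLmin⟩ := zorn_superset_nonempty S H C ⟨hC, hCfull⟩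
  exact ⟨L, hLC, hLmem.1, hLmem.2, fun E hEL hEc hEf =>
    subset_antisymm hEL (hLmin ⟨hEc, hEf⟩ hEL)⟩

/-- If `K` is the unique minimal closed subset of `Y` with `j(K) = X`, `g : Y → ℂ` is
continuous and vanishes on `K`, `ε > 0`, and `F ⊊ X` is a proper closed subset, then
there is a continuous `f : X → [0,1]` of sup-norm `1` vanishing on `F` such that
`(f ∘ j) · g · (f ∘ j)` has sup-norm less than `ε`. -/
theorem exists_cutoff_compressing_vanishing_function {Y X : Type*}
    [TopologicalSpace Y] [CompactSpace Y] [T2Space Y]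
    [TopologicalSpace X] [CompactSpace X] [T2Space X]
    (j : Y → X) (hj : Continuous j) (hjs : Function.Surjective j)
    (K : Set Y) (hKc : IsClosed K) (hKfull : j '' K = Set.univ)
    (hKmin : ∀ F ⊆ K, IsClosed F → j '' F = Set.univ → F = K)
    (hKuniq : ∀ L : Set Y, IsClosed L → j '' L = Set.univ →
      (∀ F ⊆ L, IsClosed F → j '' F = Set.univ → F = L) → L = K)
    (g : C(Y, ℂ)) (hg : ∀ y ∈ K, g y = 0)
    (ε : ℝ) (hε : 0 < ε) (F : Set X) (hF : IsClosed F) (hFp : F ⊂ Set.univ) :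
    ∃ f : C(X, ℝ), (∀ x, 0 ≤ f x) ∧ (∀ x, f x ≤ 1) ∧ ‖f‖ = 1 ∧
      (∀ x ∈ F, f x = 0) ∧
      ‖(⟨fun y => (f (j y) : ℂ) * g y * (f (j y) : ℂ), by fun_prop⟩ : C(Y, ℂ))‖ < ε := by
  -- the open set where `g` is small
  set U : Set Y := {y | ‖g y‖ < ε} with hU
  have hUopen : IsOpen U := isOpen_lt (continuous_norm.comp g.continuous) continuous_const
  have hKU : K ⊆ U := fun y hy => by simp [hU, hg y hy, hε]
  -- the bad closed set
  set C : Set Y := Uᶜ ∪ j ⁻¹' F with hCdef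
  have hCclosed : IsClosed C := (hUopen.isClosed_compl).union (hF.preimage hj)
  -- `j '' C ≠ univ`
  have hCnotfull : j '' C ≠ univ := by
    intro hfull
    obtain ⟨L, hLC, hLc, hLf, hLmin⟩ :=
      exists_minimal_closed_full_image j hj C hCclosed hfull
    have hLK : L = K := hKuniq L hLc hLf hLmin
    subst hLK
    have hKF : L ⊆ j ⁻¹' F := fun y hy => (hLC hy).resolve_left fun h => h (hKU hy)
    have : Set.univ ⊆ F := by
      rw [← hLf]; rintro x ⟨y, hy, rfl⟩; exact hKF hy
    exact hFp.2 this
  -- pick a point outside `j '' C`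
  have hjCclosed : IsClosed (j '' C) :=
    (hCclosed.isCompact.image hj).isClosed
  obtain ⟨x₁, hx₁⟩ : ∃ x, x ∉ j '' C := by
    by_contra h; push_neg at h
    exact hCnotfull (eq_univ_of_forall h)
  have hFsub : F ⊆ j '' C := fun x hx => by
    obtain ⟨y, rfl⟩ := hjs x
    exact ⟨y, Or.inr hx, rfl⟩
  -- Urysohn
  obtain ⟨f, hf0, hf1, hf01⟩ := exists_continuous_zero_one_of_isClosed hjCclosed
    (isClosed_singleton (x := x₁)) (disjoint_singleton_right.mpr hx₁)
  have hfle : ∀ x, f x ≤ 1 := fun x => (hf01 x).2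
  have hfge : ∀ x, 0 ≤ f x := fun x => (hf01 x).1
  have hfx₁ : f x₁ = 1 := hf1 rfl
  have hnorm : ‖f‖ = 1 := by
    refine le_antisymm (ContinuousMap.norm_le f zero_le_one |>.mpr fun x => ?_) ?_
    · rw [Real.norm_eq_abs, abs_le]; exact ⟨by linarith [hfge x], hfle x⟩
    · calc (1 : ℝ) = ‖f x₁‖ := by simp [hfx₁]
        _ ≤ ‖f‖ := f.norm_coe_le_norm x₁
  refine ⟨f, hfge, hfle, hnorm, fun x hx => hf0 (hFsub hx), ?_⟩
  have : Nonempty Y := ⟨(hjs x₁).choose⟩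
  rw [ContinuousMap.norm_lt_iff _ hε]
  intro y
  simp only [ContinuousMap.coe_mk]
  by_cases hy : j y ∈ j '' C
  · rw [hf0 hy]; simpa using hε
  · have hyU : y ∈ U := by
      by_contra h
      exact hy ⟨y, Or.inl h, rfl⟩
    calc ‖(f (j y) : ℂ) * g y * (f (j y) : ℂ)‖
        = ‖(f (j y) : ℂ)‖ * ‖g y‖ * ‖(f (j y) : ℂ)‖ := by rw [norm_mul, norm_mul]
      _ ≤ 1 * ‖g y‖ * 1 := by
          have h1 : ‖(f (j y) : ℂ)‖ ≤ 1 := by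
            rw [Complex.norm_real, Real.norm_eq_abs, abs_of_nonneg (hfge _)]
            exact hfle _
          have h0 : (0:ℝ) ≤ ‖g y‖ := norm_nonneg _
          exact mul_le_mul (mul_le_mul_of_nonneg_right h1 h0) h1 (norm_nonneg _)
            (by positivity)
      _ = ‖g y‖ := by ring
      _ < ε := hyU
end
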